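/- There is an injective continuous function θ : 2^ℕ → ℝ such that for all x, y ∈ 2^ℕ: x E₀ y if and only if θ(x) − θ(y) ∈ ℚ. -/

import Mathlib

open scoped Nat

noncomputable section

/-- the weight `1/(n+2)!` -/
private def wgt (n : ℕ) : ℝ := ((n + 2)! : ℝ)⁻¹

private lemma wgt_pos (n : ℕ) : 0 < wgt n := by
  have := Nat.factorial_pos (n + 2)
  unfold wgt
  positivity

private lemma summable_wgt : Summable wgt := by
  have h := Real.summable_pow_div_factorial 1
  simp only [one_pow] at h
  have h2 : Summable (fun n : ℕ => 1 / ((n + 2)! : ℝ)) :=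
    ((summable_nat_add_iff 2).2 h)
  exact (by simpa [one_div] using h2 : Summable fun n : ℕ => ((n + 2)! : ℝ)⁻¹)

private lemma fact_two_pow_le (K i : ℕ) (hK : 1 ≤ K) : K ! * 2 ^ i ≤ (i + K)! := by
  induction i with
  | zero => simp
  | succ i ih =>
      have h2 : 2 ≤ i + K + 1 := by omega
      calc K ! * 2 ^ (i + 1) = (K ! * 2 ^ i) * 2 := by ring
        _ ≤ (i + K)! * 2 := by exact Nat.mul_le_mul_right 2 ih
        _ ≤ (i + K)! * (i + K + 1) := Nat.mul_le_mul_left _ h2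
        _ = (i + K + 1)! := by rw [Nat.factorial_succ]; ring
        _ = (i + 1 + K)! := by ring_nf

/-- tail bound: `∑_{i} 1/(i+m+3)! ≤ 2/(m+3)!`. -/
private lemma tail_bound (m : ℕ) : ∑' i : ℕ, wgt (i + (m + 1)) ≤ 2 / ((m + 3)! : ℝ) := by
  have hsum : Summable (fun i : ℕ => wgt (i + (m + 1))) := (summable_nat_add_iff (m+1)).2 summable_wgt
  have hg : Summable (fun i : ℕ => (1 / ((m + 3)! : ℝ)) * (1 / 2) ^ i) :=
    (summable_geometric_of_lt_one (by norm_num) (by norm_num)).mul_left _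
  have hle : ∀ i : ℕ, wgt (i + (m + 1)) ≤ (1 / ((m + 3)! : ℝ)) * (1 / 2) ^ i := by
    intro i
    have hfp : (0:ℝ) < ((m+3)! : ℝ) := by exact_mod_cast Nat.factorial_pos _
    have h := fact_two_pow_le (m + 3) i (by omega)
    have h' : ((m + 3)! : ℝ) * 2 ^ i ≤ ((i + (m + 3))! : ℝ) := by exact_mod_cast h
    have heq : i + (m + 1) + 2 = i + (m + 3) := by omega
    rw [wgt, heq]
    rw [inv_le_iff_one_le_mul₀]
    · calc (1:ℝ) = (((m+3)!:ℝ) * 2 ^ i) * ((1 / ((m + 3)! : ℝ)) * (1/2)^i) := by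
            field_simp
            rw [← mul_pow]; norm_num
        _ ≤ ((i + (m + 3))! : ℝ) * ((1 / ((m + 3)! : ℝ)) * (1/2)^i) := by
            apply mul_le_mul_of_nonneg_right h'
            positivity
        _ = 1 / ↑(m + 3)! * (1 / 2) ^ i * ((i + (m + 3))! : ℝ) := by ring
    · exact_mod_cast Nat.factorial_pos _
  calc ∑' i : ℕ, wgt (i + (m + 1)) ≤ ∑' i : ℕ, (1 / ((m + 3)! : ℝ)) * (1 / 2) ^ i :=
        Summable.tsum_le_tsum hle hsum hg
    _ = (1 / ((m + 3)! : ℝ)) * 2 := by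
        rw [tsum_mul_left, tsum_geometric_of_lt_one (by norm_num) (by norm_num)]
        norm_num
    _ = 2 / ((m + 3)! : ℝ) := by ring

end

noncomputable section
set_option maxHeartbeats 1000000 in
open Finset in
/-- If a signed sum `∑ εₙ/(n+2)!` with `εₙ ∈ {-1,0,1}` equals a rational `q`,
then `εₘ = 0` for every `m` with `2 q.den ≤ m + 2`. -/
private lemma key (ε : ℕ → ℤ) (hε : ∀ n, |ε n| ≤ 1) (q : ℚ)
    (hq : (q : ℝ) = ∑' n, (ε n : ℝ) * wgt n) :
    ∀ m, 2 * q.den ≤ m + 2 → ε m = 0 := by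
  intro m hm
  by_contra h0
  set a : ℕ → ℝ := fun n => (ε n : ℝ) * wgt n with ha_def
  have habs_le : ∀ n, |a n| ≤ wgt n := by
    intro n
    rw [ha_def, abs_mul, abs_of_pos (wgt_pos n)]
    have : |(ε n : ℝ)| ≤ 1 := by exact_mod_cast hε n
    nlinarith [wgt_pos n]
  have ha_abs : Summable fun n => |a n| :=
    Summable.of_nonneg_of_le (fun n => abs_nonneg _) habs_le summable_wgt
  have ha : Summable a := ha_abs.of_abs
  -- split the sum
  have h1 := ha.sum_add_tsum_nat_add m
  have ha' : Summable fun i => a (i + m) := (summable_nat_add_iff m).2 ha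
  have h2 := ha'.tsum_eq_zero_add
  simp only [zero_add] at h2
  have h3 : (∑' i : ℕ, a (i + 1 + m)) = ∑' i : ℕ, a (i + (m + 1)) := by
    apply tsum_congr; intro i; congr 1; omega
  set T : ℝ := ∑' i : ℕ, a (i + (m + 1)) with hT_def
  have hsplit : (q : ℝ) = (∑ n ∈ range m, a n) + (a m + T) := by
    rw [hq, ← h1, h2, h3]
  -- basic facts
  have hd : 0 < (q.den : ℝ) := by exact_mod_cast q.pos
  have hP : (0 : ℝ) < ((m + 1)! : ℝ) := by exact_mod_cast Nat.factorial_pos _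
  set c : ℝ := ((m + 1)! : ℝ) * (q.den : ℝ) with hc_def
  have hc : 0 < c := by positivity
  -- the integer k
  set k : ℤ := (m + 1)! * q.num - (q.den : ℤ) * ∑ n ∈ range m, ε n * (((m + 1)! / (n + 2)! : ℕ) : ℤ)
    with hk_def
  have hcq : c * (q : ℝ) = ((m + 1)! : ℝ) * (q.num : ℝ) := by
    rw [Rat.cast_def, hc_def]
    field_simp
  have hhead : c * (∑ n ∈ range m, a n)
      = (q.den : ℝ) * ∑ n ∈ range m, (ε n : ℝ) * (((m + 1)! / (n + 2)! : ℕ) : ℤ) := by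
    rw [Finset.mul_sum, Finset.mul_sum]
    apply Finset.sum_congr rfl
    intro n hn
    have hn' : n < m := Finset.mem_range.1 hn
    have hdvd : (n + 2)! ∣ (m + 1)! := Nat.factorial_dvd_factorial (by omega)
    have hnz : ((n + 2)! : ℝ) ≠ 0 := by exact_mod_cast (Nat.factorial_pos _).ne'
    have hcast : (((m + 1)! / (n + 2)! : ℕ) : ℝ) = ((m + 1)! : ℝ) / ((n + 2)! : ℝ) := by
      exact_mod_cast Nat.cast_div hdvd hnz
    rw [Int.cast_natCast, hcast, hc_def]
    rw [ha_def]
    simp only [wgt]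
    field_simp
  have hk_eq : (k : ℝ) = c * (a m + T) := by
    have h4 : c * (a m + T) = c * (q : ℝ) - c * (∑ n ∈ range m, a n) := by
      rw [hsplit]; ring
    rw [h4, hcq, hhead, hk_def]
    push_cast
    ring
  -- bounds
  have hεm : |(ε m : ℝ)| = 1 := by
    have h := abs_le.1 (hε m)
    have : ε m = 1 ∨ ε m = -1 := by omega
    rcases this with h | h <;> simp [h]
  have ham : |a m| = wgt m := by
    rw [ha_def, abs_mul, hεm, one_mul, abs_of_pos (wgt_pos m)]
  have hTb : |T| ≤ 2 / ((m + 3)! : ℝ) := by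
    have hsa : Summable fun i => |a (i + (m + 1))| := (summable_nat_add_iff (m+1)).2 ha_abs
    calc |T| ≤ ∑' i : ℕ, |a (i + (m + 1))| := by
          have := norm_tsum_le_tsum_norm (f := fun i : ℕ => a (i + (m + 1)))
            (by simpa [Real.norm_eq_abs] using hsa)
          simpa [Real.norm_eq_abs] using this
      _ ≤ ∑' i : ℕ, wgt (i + (m + 1)) :=
          Summable.tsum_le_tsum (fun i => habs_le _) hsa ((summable_nat_add_iff (m+1)).2 summable_wgt)
      _ ≤ 2 / ((m + 3)! : ℝ) := tail_bound m
  -- factorial identities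
  have hfac2 : ((m + 2)! : ℝ) = (m + 2) * ((m + 1)! : ℝ) := by
    exact_mod_cast congrArg (Nat.cast : ℕ → ℝ) (Nat.factorial_succ (m + 1))
  have hfac3 : ((m + 3)! : ℝ) = (m + 3) * ((m + 2) * ((m + 1)! : ℝ)) := by
    have h := congrArg (Nat.cast : ℕ → ℝ) (Nat.factorial_succ (m + 2))
    push_cast at h ⊢
    rw [h, hfac2]
    push_cast
    ring
  have hwm : wgt m = (((m + 2) : ℝ) * ((m + 1)! : ℝ))⁻¹ := by
    rw [wgt, hfac2]
  have hm2 : (0:ℝ) < (m + 2 : ℝ) := by positivity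
  have hm3 : (0:ℝ) < (m + 3 : ℝ) := by positivity
  have hdm : 2 * (q.den : ℝ) ≤ (m + 2 : ℝ) := by exact_mod_cast hm
  have e1 : c * wgt m = (q.den : ℝ) / (m + 2 : ℝ) := by
    rw [hwm, hc_def]
    field_simp
  have e2 : c * (2 / ((m + 3)! : ℝ)) = 2 * (q.den : ℝ) / ((m + 2 : ℝ) * (m + 3 : ℝ)) := by
    rw [hfac3, hc_def]
    field_simp
  -- upper bound : |k| < 1
  have hub : |(k : ℝ)| < 1 := by
    rw [hk_eq, abs_mul, abs_of_pos hc]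
    have h5 : |a m + T| ≤ wgt m + 2 / ((m + 3)! : ℝ) := by
      calc |a m + T| ≤ |a m| + |T| := abs_add_le _ _
        _ ≤ wgt m + 2 / ((m + 3)! : ℝ) := by rw [ham]; linarith
    have h6 : c * |a m + T| ≤ c * wgt m + c * (2 / ((m + 3)! : ℝ)) := by
      nlinarith
    rw [e1, e2] at h6
    have h7 : (q.den : ℝ) / (m + 2 : ℝ) + 2 * (q.den : ℝ) / ((m + 2 : ℝ) * (m + 3 : ℝ)) < 1 := by
      rw [div_add_div _ _ (ne_of_gt hm2) (by positivity), div_lt_one (by positivity)]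
      nlinarith
    linarith
  -- lower bound : k ≠ 0
  have hlb : 0 < |(k : ℝ)| := by
    rw [hk_eq, abs_mul, abs_of_pos hc]
    have h9 := abs_add_le (a m + T) (-T)
    rw [abs_neg] at h9
    have h9' : a m + T + -T = a m := by ring
    rw [h9'] at h9
    have h5 : wgt m - 2 / ((m + 3)! : ℝ) ≤ |a m + T| := by
      rw [ham] at h9; linarith
    have h6 : 0 < wgt m - 2 / ((m + 3)! : ℝ) := by
      rw [hwm, hfac3, sub_pos, inv_eq_one_div, div_lt_div_iff₀ (by positivity) (by positivity)]
      nlinarith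
    exact mul_pos hc (lt_of_lt_of_le h6 h5)
  have hk0 : k ≠ 0 := by
    intro h
    rw [h] at hlb
    simp at hlb
  have hone : (1 : ℝ) ≤ |(k : ℝ)| := by
    have h := Int.one_le_abs hk0
    calc (1:ℝ) = ((1:ℤ):ℝ) := by norm_num
      _ ≤ ((|k| : ℤ) : ℝ) := by exact_mod_cast h
      _ = |(k:ℝ)| := by push_cast; ring
  linarith
end

noncomputable section
private def theta (x : ℕ → Bool) : ℝ := ∑' n, ((x n).toNat : ℝ) * wgt n

private lemma theta_summable (x : ℕ → Bool) :
    Summable fun n => ((x n).toNat : ℝ) * wgt n := by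
  apply Summable.of_nonneg_of_le
    (fun n => mul_nonneg (by exact_mod_cast Nat.zero_le _) (wgt_pos n).le) _ summable_wgt
  intro n
  have h : ((x n).toNat : ℝ) ≤ 1 := by cases x n <;> simp
  nlinarith [wgt_pos n]

private lemma theta_continuous : Continuous theta := by
  apply continuous_tsum (u := wgt)
  · intro n
    exact (continuous_of_discreteTopology (f := fun b : Bool => ((b.toNat : ℝ) * wgt n))).comp
      (continuous_apply n)
  · exact summable_wgt
  · intro n x
    rw [Real.norm_eq_abs, abs_mul, abs_of_pos (wgt_pos n)]
    have h : |((x n).toNat : ℝ)| ≤ 1 := by cases x n <;> simp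
    nlinarith [wgt_pos n]

private lemma theta_sub (x y : ℕ → Bool) :
    theta x - theta y
      = ∑' n, (((((x n).toNat : ℤ) - ((y n).toNat : ℤ)) : ℤ) : ℝ) * wgt n := by
  rw [theta, theta, ← (theta_summable x).tsum_sub (theta_summable y)]
  apply tsum_congr
  intro n
  push_cast
  ring
end

/-- There is an injective continuous reduction of the equivalence relation `E₀` of
eventual agreement on `2^ℕ` to the Vitali equivalence relation on `ℝ`. -/
theorem E0_continuously_embeds_in_vitali :
    ∃ θ : (ℕ → Bool) → ℝ, Function.Injective θ ∧ Continuous θ ∧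
      ∀ x y : ℕ → Bool, (∃ N : ℕ, ∀ n > N, x n = y n) ↔ ∃ q : ℚ, (q : ℝ) = θ x - θ y := by
  refine ⟨theta, ?_, theta_continuous, ?_⟩
  · intro x y hxy
    set ε : ℕ → ℤ := fun n => ((x n).toNat : ℤ) - ((y n).toNat : ℤ) with hε_def
    have hb : ∀ n, |ε n| ≤ 1 := by
      intro n; cases hx : x n <;> cases hy : y n <;> simp [hε_def, hx, hy]
    have h0 : ((0 : ℚ) : ℝ) = ∑' n, (ε n : ℝ) * wgt n := by
      rw [← theta_sub x y, hxy]
      simp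
    have hz := key ε hb 0 h0
    funext n
    have h1 : ε n = 0 := hz n (by simp)
    rw [hε_def] at h1
    cases hx : x n <;> cases hy : y n <;> simp [hx, hy] at h1 ⊢
  · intro x y
    set ε : ℕ → ℤ := fun n => ((x n).toNat : ℤ) - ((y n).toNat : ℤ) with hε_def
    have hb : ∀ n, |ε n| ≤ 1 := by
      intro n; cases hx : x n <;> cases hy : y n <;> simp [hε_def, hx, hy]
    constructor
    · rintro ⟨N, hN⟩
      refine ⟨∑ n ∈ Finset.range (N + 1), (ε n : ℚ) * (((n + 2)! : ℚ))⁻¹, ?_⟩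
      rw [theta_sub x y]
      rw [tsum_eq_sum (s := Finset.range (N + 1))
        (f := fun n => (ε n : ℝ) * wgt n) ?_]
      · push_cast
        apply Finset.sum_congr rfl
        intro n _
        rw [wgt]
      · intro n hn
        have hn' : N < n := by
          simp only [Finset.mem_range] at hn; omega
        have : x n = y n := hN n hn'
        rw [hε_def]
        simp [this]
    · rintro ⟨q, hq⟩
      rw [theta_sub x y] at hq
      have hz := key ε hb q hq
      refine ⟨2 * q.den, fun n hn => ?_⟩
      have h1 : ε n = 0 := hz n (by omega)
      rw [hε_def] at h1
      cases hx : x n <;> cases hy : y n <;> simp [hx, hy] at h1 ⊢
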